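/- For every real parameter a > -1, the ratio F_{a+1}(x)/F_a(x) tends to 0 as x → +∞ and tends to +∞ as x → -∞. -/

import Mathlib

open MeasureTheory Real Filter

/-- `Fa a x = ∫₀^∞ exp(-t² - 2xt) · t^a dt`, a Hermite-type function of negative degree. -/
noncomputable def Fa (a x : ℝ) : ℝ :=
  ∫ t in Set.Ioi (0 : ℝ), Real.exp (-(t ^ 2) - 2 * x * t) * t ^ a

open Set
open scoped ENNReal

lemma fa_integrableOn (a : ℝ) (ha : -1 < a) (x : ℝ) :
    IntegrableOn (fun t : ℝ => Real.exp (-(t ^ 2) - 2 * x * t) * t ^ a) (Set.Ioi 0) := by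
  have hG := (Real.GammaIntegral_convergent (s := a + 1) (by linarith)).const_mul
     (Real.exp ((2*x-1)^2/4))
  refine hG.mono' ?_ ?_
  · refine (ContinuousOn.mul ?_ ?_).aestronglyMeasurable measurableSet_Ioi
    · exact (Real.continuous_exp.comp (by continuity)).continuousOn
    · intro t ht
      exact (Real.continuousAt_rpow_const t a (Or.inl (ne_of_gt ht))).continuousWithinAt
  · rw [ae_restrict_iff' measurableSet_Ioi]
    filter_upwards with t ht
    have ht' : (0:ℝ) < t := ht
    have h1 : (0:ℝ) ≤ t ^ a := Real.rpow_nonneg ht'.le a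
    rw [Real.norm_eq_abs, abs_of_nonneg (mul_nonneg (Real.exp_pos _).le h1)]
    have key : Real.exp (-(t ^ 2) - 2 * x * t) ≤ Real.exp ((2*x-1)^2/4) * Real.exp (-t) := by
      rw [← Real.exp_add]
      apply Real.exp_le_exp.2
      nlinarith [sq_nonneg (t + (2*x-1)/2)]
    calc Real.exp (-(t ^ 2) - 2 * x * t) * t ^ a
        ≤ (Real.exp ((2*x-1)^2/4) * Real.exp (-t)) * t ^ a := by
          exact mul_le_mul_of_nonneg_right key h1
      _ = Real.exp ((2*x-1)^2/4) * (Real.exp (-t) * t ^ (a + 1 - 1)) := by ring_nf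

lemma fa_setIntegral_pos (a : ℝ) (ha : -1 < a) (x c : ℝ) (hc : 0 ≤ c) :
    0 < ∫ t in Set.Ioi c, Real.exp (-(t ^ 2) - 2 * x * t) * t ^ a := by
  have hint : IntegrableOn (fun t : ℝ => Real.exp (-(t ^ 2) - 2 * x * t) * t ^ a)
      (Set.Ioi c) := (fa_integrableOn a ha x).mono_set (Set.Ioi_subset_Ioi hc)
  have hnn : 0 ≤ᵐ[volume.restrict (Set.Ioi c)]
      (fun t : ℝ => Real.exp (-(t ^ 2) - 2 * x * t) * t ^ a) := by
    filter_upwards [ae_restrict_mem measurableSet_Ioi] with t ht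
    exact mul_nonneg (Real.exp_pos _).le (Real.rpow_nonneg (le_trans hc (le_of_lt ht)) a)
  rw [setIntegral_pos_iff_support_of_nonneg_ae hnn hint]
  have hsub : Set.Ioi c ⊆ Function.support
        (fun t : ℝ => Real.exp (-(t ^ 2) - 2 * x * t) * t ^ a) ∩ Set.Ioi c := by
    intro t ht
    refine ⟨?_, ht⟩
    have htpos : (0:ℝ) < t := lt_of_le_of_lt hc ht
    exact (mul_pos (Real.exp_pos _) (Real.rpow_pos_of_pos htpos a)).ne'
  calc (0:ℝ≥0∞) < volume (Set.Ioi c) := by simp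
    _ ≤ _ := measure_mono hsub

lemma fa_split (a : ℝ) (ha : -1 < a) (x c : ℝ) (hc : 0 ≤ c) :
    Fa a x = (∫ t in Set.Ioc 0 c, Real.exp (-(t ^ 2) - 2 * x * t) * t ^ a)
      + ∫ t in Set.Ioi c, Real.exp (-(t ^ 2) - 2 * x * t) * t ^ a := by
  rw [Fa, ← Set.Ioc_union_Ioi_eq_Ioi hc,
    setIntegral_union (Set.Ioc_disjoint_Ioi le_rfl) measurableSet_Ioi
      ((fa_integrableOn a ha x).mono_set Set.Ioc_subset_Ioi_self)
      ((fa_integrableOn a ha x).mono_set (Set.Ioi_subset_Ioi hc))]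

lemma fa_lower (a : ℝ) (ha : -1 < a) (x : ℝ) (hx : 1 ≤ x) :
    Real.exp (-3) * ((1/x) ^ (a+1) / (a+1)) ≤ Fa a x := by
  have hx0 : (0:ℝ) < x := lt_of_lt_of_le one_pos hx
  have hδ : (0:ℝ) < 1/x := by positivity
  have hδ1 : 1/x ≤ 1 := by rw [div_le_one hx0]; exact hx
  have hS : (0:ℝ) ≤ 1/x := hδ.le
  -- rpow integral
  have hri : IntervalIntegrable (fun t : ℝ => t ^ a) volume 0 (1/x) :=
    intervalIntegral.intervalIntegrable_rpow' ha
  have hIoc : IntegrableOn (fun t : ℝ => t ^ a) (Set.Ioc 0 (1/x)) := by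
    rw [← intervalIntegrable_iff_integrableOn_Ioc_of_le hS]; exact hri
  have hval : (∫ t in Set.Ioc 0 (1/x), t ^ a) = (1/x) ^ (a+1) / (a+1) := by
    rw [← intervalIntegral.integral_of_le hS, integral_rpow (Or.inl ha),
      Real.zero_rpow (by linarith : a + 1 ≠ 0)]
    ring
  have hmono : (∫ t in Set.Ioc 0 (1/x), Real.exp (-3) * t ^ a)
      ≤ ∫ t in Set.Ioc 0 (1/x), Real.exp (-(t ^ 2) - 2 * x * t) * t ^ a := by
    refine setIntegral_mono_on (hIoc.const_mul _)
      ((fa_integrableOn a ha x).mono_set Set.Ioc_subset_Ioi_self) measurableSet_Ioc ?_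
    intro t ht
    have h1 : (0:ℝ) < t := ht.1
    have h2 : t ≤ 1/x := ht.2
    have ht1 : t ≤ 1 := le_trans h2 hδ1
    have hxt : x * t ≤ 1 := by
      calc x * t ≤ x * (1/x) := by nlinarith
        _ = 1 := by field_simp
    have hE : Real.exp (-3) ≤ Real.exp (-(t ^ 2) - 2 * x * t) := by
      apply Real.exp_le_exp.2; nlinarith
    exact mul_le_mul_of_nonneg_right hE (Real.rpow_nonneg h1.le a)
  calc Real.exp (-3) * ((1/x) ^ (a+1) / (a+1))
      = ∫ t in Set.Ioc 0 (1/x), Real.exp (-3) * t ^ a := by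
        rw [integral_const_mul, hval]
    _ ≤ ∫ t in Set.Ioc 0 (1/x), Real.exp (-(t ^ 2) - 2 * x * t) * t ^ a := hmono
    _ ≤ Fa a x := by
        rw [fa_split a ha x (1/x) hS]
        have := (fa_setIntegral_pos a ha x (1/x) hS).le
        linarith

lemma fa_tail_le (a : ℝ) (ha : -1 < a) (x c : ℝ) (hx : 0 ≤ x) (hc : 0 < c) :
    (∫ t in Set.Ioi c, Real.exp (-(t ^ 2) - 2 * x * t) * t ^ a)
      ≤ Real.exp (-(x*c)) * Fa a 0 := by
  have hmono : (∫ t in Set.Ioi c, Real.exp (-(t ^ 2) - 2 * x * t) * t ^ a)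
      ≤ ∫ t in Set.Ioi c, Real.exp (-(x*c)) * (Real.exp (-(t ^ 2) - 2 * 0 * t) * t ^ a) := by
    refine setIntegral_mono_on
      ((fa_integrableOn a ha x).mono_set (Set.Ioi_subset_Ioi hc.le))
      (((fa_integrableOn a ha 0).mono_set (Set.Ioi_subset_Ioi hc.le)).const_mul _)
      measurableSet_Ioi ?_
    intro t ht
    have h1 : c < t := ht
    rw [← mul_assoc, ← Real.exp_add]
    have hE : Real.exp (-(t ^ 2) - 2 * x * t) ≤ Real.exp (-(x*c) + (-(t ^ 2) - 2 * 0 * t)) := by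
      apply Real.exp_le_exp.2; nlinarith
    exact mul_le_mul_of_nonneg_right hE (Real.rpow_nonneg (le_trans hc.le h1.le) a)
  calc (∫ t in Set.Ioi c, Real.exp (-(t ^ 2) - 2 * x * t) * t ^ a)
      ≤ _ := hmono
    _ = Real.exp (-(x*c)) * ∫ t in Set.Ioi c, Real.exp (-(t ^ 2) - 2 * 0 * t) * t ^ a := by
        rw [integral_const_mul]
    _ ≤ Real.exp (-(x*c)) * Fa a 0 := by
        refine mul_le_mul_of_nonneg_left ?_ (Real.exp_pos _).le
        refine setIntegral_mono_set (fa_integrableOn a ha 0) ?_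
          (HasSubset.Subset.eventuallyLE (Set.Ioi_subset_Ioi hc.le))
        filter_upwards [ae_restrict_mem measurableSet_Ioi] with t ht
        exact mul_nonneg (Real.exp_pos _).le (Real.rpow_nonneg (le_of_lt ht) a)

lemma fa_head_le (a : ℝ) (ha : -1 < a) (x c : ℝ) (hc : 0 < c) :
    (∫ t in Set.Ioc 0 c, Real.exp (-(t ^ 2) - 2 * x * t) * t ^ (a+1))
      ≤ c * Fa a x := by
  have hmono : (∫ t in Set.Ioc 0 c, Real.exp (-(t ^ 2) - 2 * x * t) * t ^ (a+1))
      ≤ ∫ t in Set.Ioc 0 c, c * (Real.exp (-(t ^ 2) - 2 * x * t) * t ^ a) := by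
    refine setIntegral_mono_on
      ((fa_integrableOn (a+1) (by linarith) x).mono_set Set.Ioc_subset_Ioi_self)
      (((fa_integrableOn a ha x).mono_set Set.Ioc_subset_Ioi_self).const_mul _)
      measurableSet_Ioc ?_
    intro t ht
    have h1 : (0:ℝ) < t := ht.1
    rw [Real.rpow_add_one h1.ne']
    have hE : (0:ℝ) < Real.exp (-(t ^ 2) - 2 * x * t) := Real.exp_pos _
    have hta : (0:ℝ) ≤ t ^ a := Real.rpow_nonneg h1.le a
    nlinarith [mul_nonneg (mul_nonneg hE.le hta) (sub_nonneg.2 ht.2)]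
  calc (∫ t in Set.Ioc 0 c, Real.exp (-(t ^ 2) - 2 * x * t) * t ^ (a+1))
      ≤ _ := hmono
    _ = c * ∫ t in Set.Ioc 0 c, Real.exp (-(t ^ 2) - 2 * x * t) * t ^ a := by
        rw [integral_const_mul]
    _ ≤ c * Fa a x := by
        refine mul_le_mul_of_nonneg_left ?_ hc.le
        rw [fa_split a ha x c hc.le]
        have := (fa_setIntegral_pos a ha x c hc.le).le
        linarith

lemma fa_tail_mul (a : ℝ) (ha : -1 < a) (x c : ℝ) (hc : 0 < c) :
    c * (∫ t in Set.Ioi c, Real.exp (-(t ^ 2) - 2 * x * t) * t ^ a)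
      ≤ ∫ t in Set.Ioi c, Real.exp (-(t ^ 2) - 2 * x * t) * t ^ (a+1) := by
  rw [← integral_const_mul]
  refine setIntegral_mono_on
    (((fa_integrableOn a ha x).mono_set (Set.Ioi_subset_Ioi hc.le)).const_mul _)
    ((fa_integrableOn (a+1) (by linarith) x).mono_set (Set.Ioi_subset_Ioi hc.le))
    measurableSet_Ioi ?_
  intro t ht
  have h1 : c < t := ht
  have h0 : (0:ℝ) < t := lt_trans hc h1
  rw [Real.rpow_add_one h0.ne']
  have hE : (0:ℝ) < Real.exp (-(t ^ 2) - 2 * x * t) := Real.exp_pos _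
  have hta : (0:ℝ) ≤ t ^ a := Real.rpow_nonneg h0.le a
  nlinarith [mul_nonneg (mul_nonneg hE.le hta) (sub_nonneg.2 h1.le)]

lemma fa_head_le_neg (a : ℝ) (ha : -1 < a) (x c : ℝ) (hx : x ≤ 0) (hc : 0 < c) :
    (∫ t in Set.Ioc 0 c, Real.exp (-(t ^ 2) - 2 * x * t) * t ^ a)
      ≤ Real.exp (-(2*x*c)) * Fa a 0 := by
  have hmono : (∫ t in Set.Ioc 0 c, Real.exp (-(t ^ 2) - 2 * x * t) * t ^ a)
      ≤ ∫ t in Set.Ioc 0 c, Real.exp (-(2*x*c)) * (Real.exp (-(t ^ 2) - 2 * 0 * t) * t ^ a) := by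
    refine setIntegral_mono_on
      ((fa_integrableOn a ha x).mono_set Set.Ioc_subset_Ioi_self)
      (((fa_integrableOn a ha 0).mono_set Set.Ioc_subset_Ioi_self).const_mul _)
      measurableSet_Ioc ?_
    intro t ht
    rw [← mul_assoc, ← Real.exp_add]
    have hE : Real.exp (-(t ^ 2) - 2 * x * t) ≤ Real.exp (-(2*x*c) + (-(t ^ 2) - 2 * 0 * t)) := by
      apply Real.exp_le_exp.2
      nlinarith [ht.1, ht.2]
    exact mul_le_mul_of_nonneg_right hE (Real.rpow_nonneg ht.1.le a)
  calc (∫ t in Set.Ioc 0 c, Real.exp (-(t ^ 2) - 2 * x * t) * t ^ a)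
      ≤ _ := hmono
    _ = Real.exp (-(2*x*c)) * ∫ t in Set.Ioc 0 c, Real.exp (-(t ^ 2) - 2 * 0 * t) * t ^ a := by
        rw [integral_const_mul]
    _ ≤ Real.exp (-(2*x*c)) * Fa a 0 := by
        refine mul_le_mul_of_nonneg_left ?_ (Real.exp_pos _).le
        refine setIntegral_mono_set (fa_integrableOn a ha 0) ?_
          (HasSubset.Subset.eventuallyLE Set.Ioc_subset_Ioi_self)
        filter_upwards [ae_restrict_mem measurableSet_Ioi] with t ht
        exact mul_nonneg (Real.exp_pos _).le (Real.rpow_nonneg (le_of_lt ht) a)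

lemma fa_tail_lower (a : ℝ) (ha : -1 < a) (x c : ℝ) (hx : x ≤ 0) (hc : 0 < c) :
    (Real.exp (-(2*c+1)^2) * min ((2*c) ^ a) ((2*c+1) ^ a)) * Real.exp (-(4*x*c))
      ≤ ∫ t in Set.Ioi c, Real.exp (-(t ^ 2) - 2 * x * t) * t ^ a := by
  have hsub : Set.Ioc (2*c) (2*c+1) ⊆ Set.Ioi c := fun t ht =>
    lt_trans (by linarith) ht.1
  have hint : IntegrableOn (fun t : ℝ => Real.exp (-(t ^ 2) - 2 * x * t) * t ^ a)
      (Set.Ioc (2*c) (2*c+1)) :=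
    (fa_integrableOn a ha x).mono_set (fun t ht => lt_trans hc (hsub ht))
  have hKle : ∀ t ∈ Set.Ioc (2*c) (2*c+1),
      (Real.exp (-(2*c+1)^2) * min ((2*c) ^ a) ((2*c+1) ^ a)) * Real.exp (-(4*x*c))
        ≤ Real.exp (-(t ^ 2) - 2 * x * t) * t ^ a := by
    intro t ht
    have h1 : 2*c < t := ht.1
    have h2 : t ≤ 2*c+1 := ht.2
    have h0 : (0:ℝ) < t := by linarith
    have hEexp : Real.exp (-(2*c+1)^2) * Real.exp (-(4*x*c))
        ≤ Real.exp (-(t ^ 2) - 2 * x * t) := by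
      rw [← Real.exp_add]
      apply Real.exp_le_exp.2
      nlinarith
    have hmin : min ((2*c) ^ a) ((2*c+1) ^ a) ≤ t ^ a := by
      rcases le_or_gt 0 a with h | h
      · exact le_trans (min_le_left _ _) (Real.rpow_le_rpow (by linarith) h1.le h)
      · exact le_trans (min_le_right _ _)
          (Real.rpow_le_rpow_of_nonpos h0 h2 h.le)
    calc (Real.exp (-(2*c+1)^2) * min ((2*c) ^ a) ((2*c+1) ^ a)) * Real.exp (-(4*x*c))
        = (Real.exp (-(2*c+1)^2) * Real.exp (-(4*x*c))) * min ((2*c) ^ a) ((2*c+1) ^ a) := by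
          ring
      _ ≤ Real.exp (-(t ^ 2) - 2 * x * t) * t ^ a := by
          have hmn : (0:ℝ) ≤ min ((2*c) ^ a) ((2*c+1) ^ a) :=
            le_min (Real.rpow_nonneg (by linarith) a) (Real.rpow_nonneg (by linarith) a)
          exact mul_le_mul hEexp hmin hmn (Real.exp_pos _).le
  calc (Real.exp (-(2*c+1)^2) * min ((2*c) ^ a) ((2*c+1) ^ a)) * Real.exp (-(4*x*c))
      = ((Real.exp (-(2*c+1)^2) * min ((2*c) ^ a) ((2*c+1) ^ a)) * Real.exp (-(4*x*c)))
        * (volume (Set.Ioc (2*c) (2*c+1))).toReal := by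
        simp
    _ ≤ ∫ t in Set.Ioc (2*c) (2*c+1), Real.exp (-(t ^ 2) - 2 * x * t) * t ^ a :=
        setIntegral_ge_of_const_le_real measurableSet_Ioc (by simp) hKle hint
    _ ≤ ∫ t in Set.Ioi c, Real.exp (-(t ^ 2) - 2 * x * t) * t ^ a := by
        refine setIntegral_mono_set ((fa_integrableOn a ha x).mono_set (Set.Ioi_subset_Ioi hc.le))
          ?_ (HasSubset.Subset.eventuallyLE hsub)
        filter_upwards [ae_restrict_mem measurableSet_Ioi] with t ht
        exact mul_nonneg (Real.exp_pos _).le (Real.rpow_nonneg (le_trans hc.le (le_of_lt ht)) a)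

lemma fa_pos (a : ℝ) (ha : -1 < a) (x : ℝ) : 0 < Fa a x :=
  fa_setIntegral_pos a ha x 0 le_rfl

/-- For `a > -1`, the ratio `F_{a+1}(x)/F_a(x)` tends to `0` as `x → +∞`
and to `+∞` as `x → -∞`. -/
theorem Fa_ratio_asymptotics (a : ℝ) (ha : -1 < a) :
    Tendsto (fun x : ℝ => Fa (a + 1) x / Fa a x) atTop (nhds 0) ∧
    Tendsto (fun x : ℝ => Fa (a + 1) x / Fa a x) atBot atTop := by
  have ha1 : (-1:ℝ) < a + 1 := by linarith
  have ha0 : (0:ℝ) < a + 1 := by linarith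
  constructor
  · rw [Metric.tendsto_nhds]
    intro ε hε
    set c := ε/2 with hcdef
    have hc : 0 < c := by positivity
    have hg : Tendsto (fun x : ℝ => ((a+1) * Real.exp 3 * Fa (a+1) 0) *
        (x ^ (a+1) * Real.exp (-(c * x)))) atTop (nhds 0) := by
      have h0 := tendsto_rpow_mul_exp_neg_mul_atTop_nhds_zero (a+1) c hc
      have h1 := h0.const_mul ((a+1) * Real.exp 3 * Fa (a+1) 0)
      rw [mul_zero] at h1
      refine h1.congr (fun x => ?_)
      ring_nf
    filter_upwards [eventually_ge_atTop (1:ℝ),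
        hg.eventually_lt_const (half_pos hε)] with x hx1 hgx
    have hx0 : (0:ℝ) < x := lt_of_lt_of_le one_pos hx1
    have hFapos : 0 < Fa a x := fa_pos a ha x
    have hF1nn : 0 ≤ Fa (a+1) 0 := (fa_pos (a+1) ha1 0).le
    have hL : Real.exp (-3) * ((1/x) ^ (a+1) / (a+1)) ≤ Fa a x := fa_lower a ha x hx1
    have hLpos : 0 < Real.exp (-3) * ((1/x) ^ (a+1) / (a+1)) := by positivity
    have hup : Fa (a+1) x ≤ c * Fa a x + Real.exp (-(x*c)) * Fa (a+1) 0 := by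
      rw [fa_split (a+1) ha1 x c hc.le]
      exact add_le_add (fa_head_le a ha x c hc) (fa_tail_le (a+1) ha1 x c (by linarith) hc)
    have hdiv1 : Fa (a+1) x / Fa a x
        ≤ c + (Real.exp (-(x*c)) * Fa (a+1) 0) / Fa a x := by
      calc Fa (a+1) x / Fa a x ≤ (c * Fa a x + Real.exp (-(x*c)) * Fa (a+1) 0) / Fa a x := by
            gcongr
        _ = c + (Real.exp (-(x*c)) * Fa (a+1) 0) / Fa a x := by
            field_simp
    have hdiv2 : (Real.exp (-(x*c)) * Fa (a+1) 0) / Fa a x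
        ≤ (Real.exp (-(x*c)) * Fa (a+1) 0) / (Real.exp (-3) * ((1/x) ^ (a+1) / (a+1))) :=
      div_le_div_of_nonneg_left (by positivity) hLpos hL
    have hEq : (Real.exp (-(x*c)) * Fa (a+1) 0) / (Real.exp (-3) * ((1/x) ^ (a+1) / (a+1)))
        = ((a+1) * Real.exp 3 * Fa (a+1) 0) * (x ^ (a+1) * Real.exp (-(c * x))) := by
      have hprod : (1/x : ℝ) ^ (a+1) * x ^ (a+1) = 1 := by
        rw [← Real.mul_rpow (by positivity) hx0.le, one_div, inv_mul_cancel₀ hx0.ne',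
          Real.one_rpow]
      have he3 : Real.exp 3 * Real.exp (-3) = 1 := by
        rw [← Real.exp_add]; norm_num
      have hxc : (-(x*c)) = (-(c*x)) := by ring
      rw [hxc, div_eq_iff hLpos.ne']
      field_simp
      linear_combination (-(Fa (a+1) 0))
          * hprod + (-(Fa (a+1) 0 * x ^ (a+1) * (1/x) ^ (a+1))) * he3
    have hnn : 0 ≤ Fa (a+1) x / Fa a x :=
      div_nonneg (fa_pos (a+1) ha1 x).le hFapos.le
    rw [Real.dist_eq, sub_zero, abs_of_nonneg hnn]
    calc Fa (a+1) x / Fa a x ≤ c + (Real.exp (-(x*c)) * Fa (a+1) 0) / Fa a x := hdiv1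
      _ ≤ c + ((a+1) * Real.exp 3 * Fa (a+1) 0) * (x ^ (a+1) * Real.exp (-(c * x))) := by
          rw [← hEq]; exact add_le_add_right hdiv2 c
      _ < c + ε/2 := by linarith
      _ = ε := by rw [hcdef]; ring
  · rw [tendsto_atTop]
    intro b
    set M := max b 1 with hMdef
    have hM1 : (1:ℝ) ≤ M := le_max_right _ _
    have hMb : b ≤ M := le_max_left _ _
    set c := 2*M with hcdef
    have hc : (0:ℝ) < c := by positivity
    set m := Real.exp (-(2*c+1)^2) * min ((2*c) ^ a) ((2*c+1) ^ a) with hmdef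
    have hm : 0 < m := by
      apply mul_pos (Real.exp_pos _)
      exact lt_min (Real.rpow_pos_of_pos (by linarith) a)
        (Real.rpow_pos_of_pos (by linarith) a)
    have hlin : Tendsto (fun x : ℝ => Real.exp (-(2*x*c))) atBot atTop := by
      apply Real.tendsto_exp_atTop.comp
      have h := tendsto_neg_atBot_atTop.const_mul_atTop (by positivity : (0:ℝ) < 2*c)
      refine h.congr (fun x => by ring)
    filter_upwards [hlin.eventually_ge_atTop (Fa a 0 / m), eventually_le_atBot (0:ℝ)]
      with x hx hx0
    have hIpos : 0 < ∫ t in Set.Ioi c, Real.exp (-(t ^ 2) - 2 * x * t) * t ^ a :=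
      fa_setIntegral_pos a ha x c hc.le
    set I := ∫ t in Set.Ioi c, Real.exp (-(t ^ 2) - 2 * x * t) * t ^ a with hIdef
    have hhead : (∫ t in Set.Ioc 0 c, Real.exp (-(t ^ 2) - 2 * x * t) * t ^ a) ≤ I := by
      calc (∫ t in Set.Ioc 0 c, Real.exp (-(t ^ 2) - 2 * x * t) * t ^ a)
          ≤ Real.exp (-(2*x*c)) * Fa a 0 := fa_head_le_neg a ha x c hx0 hc
        _ ≤ Real.exp (-(2*x*c)) * (m * Real.exp (-(2*x*c))) := by
            refine mul_le_mul_of_nonneg_left ?_ (Real.exp_pos _).le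
            rw [div_le_iff₀ hm] at hx
            linarith [hx]
        _ = m * Real.exp (-(4*x*c)) := by
            rw [show (-(4*x*c)) = (-(2*x*c)) + (-(2*x*c)) by ring, Real.exp_add]; ring
        _ ≤ I := fa_tail_lower a ha x c hx0 hc
    have hFa_le : Fa a x ≤ 2 * I := by
      rw [fa_split a ha x c hc.le]; linarith
    have hFa1_ge : c * I ≤ Fa (a+1) x := by
      rw [fa_split (a+1) ha1 x c hc.le]
      have hnn : 0 ≤ ∫ t in Set.Ioc 0 c, Real.exp (-(t ^ 2) - 2 * x * t) * t ^ (a+1) := by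
        apply setIntegral_nonneg measurableSet_Ioc
        intro t ht
        exact mul_nonneg (Real.exp_pos _).le (Real.rpow_nonneg ht.1.le (a+1))
      have := fa_tail_mul a ha x c hc
      linarith
    have hFaPos : 0 < Fa a x := fa_pos a ha x
    calc b ≤ M := hMb
      _ = (c * I) / (2 * I) := by
          rw [hcdef]; field_simp
      _ ≤ Fa (a+1) x / Fa a x :=
          div_le_div₀ (fa_pos (a+1) ha1 x).le hFa1_ge hFaPos hFa_le
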